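/- Suppose a graph G on vertex set V admits a proper t-coloring f of G[V∖U] for some U = {u_1,…,u_k}, and suppose there exist sets I_1,…,I_k of colors, each of size at least 10, such that the union of the color classes ⋃_{i=1}^k {x ∈ N_G(u_i) : f(x) ∈ I_i} is an independent set in G. If moreover G[U] is 10-choosable, then χ(G) ≤ t + 1. -/

import Mathlib

/-- If `f` is a proper `t`-coloring of `G[V∖U]` (colors in `{1,…,t}`), all
neighbors of vertices of `U` lie outside `U`, there exist color lists
`I_u ⊆ {1,…,t}` of size at least `10` for the vertices `u ∈ U` such that the
union of the selected color classes `⋃_{u∈U} {x ∈ N_G(u) : f(x) ∈ I_u}` is an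
independent set of `G`, and `G[U]` is `10`-choosable, then `χ(G) ≤ t+1`. -/
theorem stmt19 {V : Type*} [Fintype V] [DecidableEq V] (G : SimpleGraph V)
    (t : ℕ) (U : Finset V) (f : V → ℕ)
    (hf_range : ∀ v ∉ U, f v ∈ Finset.Icc 1 t)
    (hf_proper : ∀ a b, a ∉ U → b ∉ U → G.Adj a b → f a ≠ f b)
    (hnbrs : ∀ u ∈ U, ∀ x, G.Adj u x → x ∉ U)
    (I : V → Finset ℕ)
    (hIcard : ∀ u ∈ U, 10 ≤ (I u).card)
    (hIsub : ∀ u ∈ U, I u ⊆ Finset.Icc 1 t)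
    (hind : ∀ x y, (∃ u ∈ U, G.Adj u x ∧ f x ∈ I u) →
      (∃ u ∈ U, G.Adj u y ∧ f y ∈ I u) → x ≠ y → ¬G.Adj x y)
    (hchoose : ∀ L : V → Finset ℕ, (∀ u ∈ U, (L u).card = 10) →
      ∃ g : V → ℕ, (∀ u ∈ U, g u ∈ L u) ∧
        ∀ a b, a ∈ U → b ∈ U → G.Adj a b → g a ≠ g b) :
    G.Colorable (t + 1) := by
  classical
  -- choose 10-element sublists of I u
  have hL : ∀ u ∈ U, ∃ L ⊆ I u, L.card = 10 := fun u hu =>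
    Finset.exists_subset_card_eq (hIcard u hu)
  set L : V → Finset ℕ := fun u => if h : u ∈ U then (hL u h).choose else ∅ with hLdef
  have hLsub : ∀ u ∈ U, L u ⊆ I u := by
    intro u hu; simp only [hLdef, dif_pos hu]; exact (hL u hu).choose_spec.1
  have hLcard : ∀ u ∈ U, (L u).card = 10 := by
    intro u hu; simp only [hLdef, dif_pos hu]; exact (hL u hu).choose_spec.2
  obtain ⟨g, hg1, hg2⟩ := hchoose L hLcard
  -- the combined coloring
  set S : V → Prop := fun x => ∃ u ∈ U, G.Adj u x ∧ f x ∈ I u with hS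
  set c : V → ℕ := fun v => if v ∈ U then g v else if S v then t + 1 else f v with hc
  have hcIcc : ∀ v, c v ∈ Finset.Icc 1 (t + 1) := by
    intro v
    simp only [hc]
    by_cases hv : v ∈ U
    · simp only [if_pos hv]
      have := hIsub v hv (hLsub v hv (hg1 v hv))
      simp only [Finset.mem_Icc] at this ⊢
      omega
    · simp only [if_neg hv]
      by_cases hs : S v
      · simp only [if_pos hs, Finset.mem_Icc]; omega
      · simp only [if_neg hs]
        have := hf_range v hv
        simp only [Finset.mem_Icc] at this ⊢
        omega
  have hcproper : ∀ a b, G.Adj a b → c a ≠ c b := by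
    intro a b hab
    -- wlog style case analysis
    by_cases ha : a ∈ U
    · have hb : b ∉ U := hnbrs a ha b hab
      simp only [hc, if_pos ha, if_neg hb]
      by_cases hsb : S b
      · simp only [if_pos hsb]
        have := hIsub a ha (hLsub a ha (hg1 a ha))
        simp only [Finset.mem_Icc] at this; omega
      · simp only [if_neg hsb]
        intro heq
        exact hsb ⟨a, ha, hab, heq ▸ hLsub a ha (hg1 a ha)⟩
    · by_cases hb : b ∈ U
      · have ha' : a ∉ U := hnbrs b hb a hab.symm
        simp only [hc, if_pos hb, if_neg ha']
        by_cases hsa : S a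
        · simp only [if_pos hsa]
          have := hIsub b hb (hLsub b hb (hg1 b hb))
          simp only [Finset.mem_Icc] at this; omega
        · simp only [if_neg hsa]
          intro heq
          exact hsa ⟨b, hb, hab.symm, heq.symm ▸ hLsub b hb (hg1 b hb)⟩
      · simp only [hc, if_neg ha, if_neg hb]
        by_cases hsa : S a <;> by_cases hsb : S b
        · exact absurd hab (hind a b hsa hsb (G.ne_of_adj hab))
        · simp only [if_pos hsa, if_neg hsb]
          have := hf_range b hb; simp only [Finset.mem_Icc] at this; omega
        · simp only [if_neg hsa, if_pos hsb]
          have := hf_range a ha; simp only [Finset.mem_Icc] at this; omega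
        · simp only [if_neg hsa, if_neg hsb]
          exact hf_proper a b ha hb hab
  refine ⟨SimpleGraph.Coloring.mk (fun v => ⟨c v - 1, ?_⟩) ?_⟩
  · have := hcIcc v; simp only [Finset.mem_Icc] at this; omega
  · intro a b hab
    have h := hcproper a b hab
    have ha := hcIcc a; have hb := hcIcc b
    simp only [Finset.mem_Icc] at ha hb
    simp only [Fin.mk.injEq, ne_eq]
    omega
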